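/- Hence the least number heuristic is a strictly weaker symmetry break than minimality with respect to all transpositions: every transposition-minimal magma satisfies LNH, but there is an LNH-satisfying magma of order 4 that is not transposition-minimal. -/

import Mathlib

/-- The isomorphic copy `π(A)` of a magma `A` under a permutation `π`. -/
def magCopy {n : ℕ} (π : Equiv.Perm (Fin n)) (A : Fin n → Fin n → Fin n) :
    Fin n → Fin n → Fin n :=
  fun a b => π (A (π.symm a) (π.symm b))

/-- The vectorization of a magma's multiplication table, as a lex-ordered vector. -/
def magVec {n : ℕ} (v : Fin (n * n) ≃ Fin n × Fin n) (A : Fin n → Fin n → Fin n) :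
    Lex (Fin (n * n) → Fin n) :=
  toLex fun i => A (v i).1 (v i).2

/-- The maximum of all "seen" domain elements at cell index `i`: the row and
column indices of the current cell, together with all row indices, column
indices and values of earlier cells. -/
def seenMax {n : ℕ} (v : Fin (n * n) ≃ Fin n × Fin n)
    (A : Fin n → Fin n → Fin n) (i : Fin (n * n)) : ℕ :=
  max (max ((v i).1 : ℕ) ((v i).2 : ℕ))
    ((Finset.univ.filter (fun j => j < i)).sup
      (fun j => max (max ((v j).1 : ℕ) ((v j).2 : ℕ)) ((A (v j).1 (v j).2 : ℕ))))

/-- The least number heuristic: reading the cells in vectorization order, each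
value is at most one greater than the maximum of all previously seen elements. -/
def LNH {n : ℕ} (v : Fin (n * n) ≃ Fin n × Fin n)
    (A : Fin n → Fin n → Fin n) : Prop :=
  ∀ i : Fin (n * n), (A (v i).1 (v i).2 : ℕ) ≤ seenMax v A i + 1

/-- `A` is minimal with respect to the set of all transpositions. -/
def TranspMinimal {n : ℕ} (v : Fin (n * n) ≃ Fin n × Fin n)
    (A : Fin n → Fin n → Fin n) : Prop :=
  ∀ a b : Fin n, a ≠ b → magVec v A ≤ magVec v (magCopy (Equiv.swap a b) A)


/-- Counterexample magma of order 4: row 0 is `0,1,2,3`, `A 1 0 = 3`, rest `0`. -/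
def AexLNH : Fin 4 → Fin 4 → Fin 4 := fun a b =>
  if a = 0 then b else if a = 1 ∧ b = 0 then 3 else 0

/-- The least number heuristic is a strictly weaker symmetry break than
minimality with respect to all transpositions: every transposition-minimal
magma satisfies LNH, but there is an LNH-satisfying magma of order 4 that is
not transposition-minimal (row-by-row ordering). -/
theorem stmt_14 :
    (∀ (n : ℕ) (A : Fin n → Fin n → Fin n),
        TranspMinimal (finProdFinEquiv.symm : Fin (n * n) ≃ Fin n × Fin n) A →
        LNH (finProdFinEquiv.symm : Fin (n * n) ≃ Fin n × Fin n) A) ∧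
    (∃ A : Fin 4 → Fin 4 → Fin 4,
        LNH (finProdFinEquiv.symm : Fin (4 * 4) ≃ Fin 4 × Fin 4) A ∧
        ¬ TranspMinimal (finProdFinEquiv.symm : Fin (4 * 4) ≃ Fin 4 × Fin 4) A) := by
  constructor
  · intro n A hmin
    set v : Fin (n * n) ≃ Fin n × Fin n := finProdFinEquiv.symm with hv
    intro i
    by_contra hcon
    push_neg at hcon
    set M : ℕ := seenMax v A i with hM
    set mF : Fin n := A (v i).1 (v i).2 with hmF
    have hsn : M + 1 < n := lt_trans hcon mF.isLt
    set sF : Fin n := ⟨M + 1, hsn⟩ with hsF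
    have hne : sF ≠ mF := Fin.ne_of_val_ne (by simpa using hcon.ne)
    set τ : Equiv.Perm (Fin n) := Equiv.swap sF mF with hτ
    -- τ fixes everything ≤ M
    have hfix : ∀ x : Fin n, (x : ℕ) ≤ M → τ x = x := by
      intro x hx
      refine Equiv.swap_apply_of_ne_of_ne (Fin.ne_of_val_ne ?_) (Fin.ne_of_val_ne ?_)
      · simp only [hsF]; omega
      · have : (M : ℕ) + 1 < (mF : ℕ) := hcon
        omega
    have hri : ((v i).1 : ℕ) ≤ M := le_trans (le_max_left _ _) (le_max_left _ _)
    have hci : ((v i).2 : ℕ) ≤ M := le_trans (le_max_right _ _) (le_max_left _ _)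
    have hj : ∀ j : Fin (n * n), j < i →
        ((v j).1 : ℕ) ≤ M ∧ ((v j).2 : ℕ) ≤ M ∧ ((A (v j).1 (v j).2 : ℕ)) ≤ M := by
      intro j hji
      have hmem : j ∈ Finset.univ.filter (fun j => j < i) := by
        simp [hji]
      have := Finset.le_sup (f := fun j => max (max ((v j).1 : ℕ) ((v j).2 : ℕ))
        ((A (v j).1 (v j).2 : ℕ))) hmem
      have hsup : max (max ((v j).1 : ℕ) ((v j).2 : ℕ)) ((A (v j).1 (v j).2 : ℕ)) ≤ M :=
        le_trans this (le_max_right _ _)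
      refine ⟨?_, ?_, ?_⟩ <;>
        [exact le_trans (le_trans (le_max_left _ _) (le_max_left _ _)) hsup;
         exact le_trans (le_trans (le_max_right _ _) (le_max_left _ _)) hsup;
         exact le_trans (le_max_right _ _) hsup]
    have hlt : magVec v (magCopy τ A) < magVec v A := by
      refine ⟨i, ?_, ?_⟩
      · intro j hji
        obtain ⟨h1, h2, h3⟩ := hj j hji
        show magCopy τ A (v j).1 (v j).2 = A (v j).1 (v j).2
        unfold magCopy
        rw [Equiv.symm_swap]
        rw [hfix _ h1, hfix _ h2]
        exact hfix _ h3
      · show magCopy τ A (v i).1 (v i).2 < A (v i).1 (v i).2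
        unfold magCopy
        rw [Equiv.symm_swap, hfix _ hri, hfix _ hci, ← hmF]
        have : τ mF = sF := Equiv.swap_apply_right _ _
        rw [this]
        exact Fin.mk_lt_mk.mpr hcon |>.trans_le le_rfl
    exact hlt.not_ge (hmin sF mF hne)
  · refine ⟨AexLNH, by unfold LNH; decide, fun hmin => ?_⟩
    have hle := hmin 1 2 (by decide)
    have hlt : magVec (finProdFinEquiv.symm : Fin (4 * 4) ≃ Fin 4 × Fin 4)
        (magCopy (Equiv.swap 1 2) AexLNH) <
        magVec (finProdFinEquiv.symm : Fin (4 * 4) ≃ Fin 4 × Fin 4) AexLNH :=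
      ⟨⟨4, by norm_num⟩, by
        show ∀ j : Fin (4 * 4), j < ⟨4, by norm_num⟩ →
          magCopy (Equiv.swap 1 2) AexLNH (finProdFinEquiv.symm j).1 (finProdFinEquiv.symm j).2 =
            AexLNH (finProdFinEquiv.symm j).1 (finProdFinEquiv.symm j).2
        decide, by decide⟩
    exact hlt.not_ge hle
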